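/- Assume the complex-valued linear system Σ is stabilizable and {P₁,P₂} is the unique positive definite bimatrix solution of the bimatrix Riccati equation. Then the iterates {P₁(k),P₂(k)} starting from {P₁(0),P₂(0)} = {Q,0} converge: P₁(k) → P₁ and P₂(k) → P₂ (entrywise) as k → ∞. -/

import Mathlib

set_option maxHeartbeats 1000000
set_option linter.unusedSectionVars false


open Matrix Filter Topology
open scoped ENNReal ComplexOrder

noncomputable section

/-- Entrywise complex conjugate of a matrix, `M^#`. -/
def mconj {k l : Type*} (A : Matrix k l ℂ) : Matrix k l ℂ := A.map (starRingEnd ℂ)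

/-- A bimatrix `{A₁, A₂}` of `k × l` complex matrices. -/
structure Bimatrix (k l : ℕ) where
  fst : Matrix (Fin k) (Fin l) ℂ
  snd : Matrix (Fin k) (Fin l) ℂ

namespace Bimatrix

variable {k l p : ℕ}

/-- The action of a bimatrix on a vector: `{A₁,A₂}x = A₁x + A₂^# x^#`. -/
def apply (A : Bimatrix k l) (x : Fin l → ℂ) : Fin k → ℂ :=
  A.fst *ᵥ x + mconj A.snd *ᵥ star x

/-- Bimatrix product `{A₁,A₂}{B₁,B₂} = {A₁B₁ + A₂^#B₂, A₁^#B₂ + A₂B₁}`. -/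
def mul (A : Bimatrix k l) (B : Bimatrix l p) : Bimatrix k p :=
  ⟨A.fst * B.fst + mconj A.snd * B.snd, mconj A.fst * B.snd + A.snd * B.fst⟩

/-- Bimatrix conjugate transpose `{A₁,A₂}^H = {A₁^H, A₂^T}`. -/
def conjT (A : Bimatrix k l) : Bimatrix l k :=
  ⟨A.fst.conjTranspose, A.snd.transpose⟩

def add (A B : Bimatrix k l) : Bimatrix k l := ⟨A.fst + B.fst, A.snd + B.snd⟩

def sub (A B : Bimatrix k l) : Bimatrix k l := ⟨A.fst - B.fst, A.snd - B.snd⟩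

def neg (A : Bimatrix k l) : Bimatrix k l := ⟨-A.fst, -A.snd⟩

/-- The identity bimatrix `{I, 0}`. -/
def one (k : ℕ) : Bimatrix k k := ⟨1, 0⟩

/-- A bimatrix is Hermitian if `P₁^H = P₁` and `P₂^T = P₂`. -/
def IsHermitian (P : Bimatrix k k) : Prop :=
  P.fst.conjTranspose = P.fst ∧ P.snd.transpose = P.snd

/-- The real quadratic form `Re (x^H P₁ x + x^H P₂^# x^#)` of a bimatrix. -/
def quadForm (P : Bimatrix k k) (x : Fin k → ℂ) : ℝ :=
  (star x ⬝ᵥ P.apply x).re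

/-- Positive semidefinite bimatrix. -/
def PosSemidef (P : Bimatrix k k) : Prop :=
  P.IsHermitian ∧ ∀ x : Fin k → ℂ, 0 ≤ P.quadForm x

/-- Positive definite bimatrix. -/
def PosDef (P : Bimatrix k k) : Prop :=
  P.IsHermitian ∧ (∀ x : Fin k → ℂ, 0 ≤ P.quadForm x) ∧
    ∀ x : Fin k → ℂ, x ≠ 0 → 0 < P.quadForm x

/-- The Loewner-type order on bimatrices: `X ≤ Y` iff `Y - X ≥ 0`. -/
def le (X Y : Bimatrix k k) : Prop := PosSemidef (Y.sub X)

/-- `T` is the (two-sided) inverse of the bimatrix `S`. -/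
def IsInv (S T : Bimatrix k k) : Prop := S.mul T = one k ∧ T.mul S = one k

/-- The complex-matrix representation of a bimatrix. -/
def toMat (S : Bimatrix k k) : Matrix (Fin k ⊕ Fin k) (Fin k ⊕ Fin k) ℂ :=
  fromBlocks S.fst (mconj S.snd) S.snd (mconj S.fst)

/-- The inverse of a bimatrix, extracted from the inverse of its complex-matrix
representation.  When `S` is invertible as a bimatrix, `S.inv` is its genuine inverse. -/
def inv (S : Bimatrix k k) : Bimatrix k k :=
  ⟨(toMat S)⁻¹.toBlocks₁₁, (toMat S)⁻¹.toBlocks₂₁⟩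

end Bimatrix

variable {n m : ℕ}

/-- The complex-valued linear system `x(k+1) = {A₁,A₂}x(k) + {B₁,B₂}u(k)` is
stabilizable if some full state feedback `u(k) = K₁x(k) + K₂^#x^#(k)` drives every
closed-loop solution to zero. -/
def Stabilizable (A : Bimatrix n n) (B : Bimatrix n m) : Prop :=
  ∃ K : Bimatrix m n, ∀ x : ℕ → (Fin n → ℂ),
    (∀ k : ℕ, x (k + 1) = A.apply (x k) + B.apply (K.apply (x k))) →
    Tendsto x atTop (𝓝 0)

/-- `{S₁,S₂} = {R,0} + {B₁,B₂}^H {P₁,P₂} {B₁,B₂}`. -/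
def Smat (B : Bimatrix n m) (R : Matrix (Fin m) (Fin m) ℂ) (P : Bimatrix n n) :
    Bimatrix m m :=
  (Bimatrix.mk R 0).add (B.conjT.mul (P.mul B))

/-- The bimatrix Riccati equation
`-{Q,0} = {A}^H{P}{A} - {P} - {A}^H{P}{B}{S}⁻¹{B}^H{P}{A}`, where
`{S} = {R,0} + {B}^H{P}{B}` is required to be invertible. -/
def RiccatiEq (A : Bimatrix n n) (B : Bimatrix n m)
    (Q : Matrix (Fin n) (Fin n) ℂ) (R : Matrix (Fin m) (Fin m) ℂ)
    (P : Bimatrix n n) : Prop :=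
  ∃ T : Bimatrix m m, (Smat B R P).IsInv T ∧
    (Bimatrix.mk Q 0).neg =
      ((A.conjT.mul (P.mul A)).sub P).sub
        (A.conjT.mul (P.mul (B.mul (T.mul (B.conjT.mul (P.mul A))))))

/-- The Riccati iteration `{P(0)} = {Q,0}`,
`{P(k+1)} = {Q,0} + {A}^H{P(k)}{A} - {A}^H{P(k)}{B}{S(k)}⁻¹{B}^H{P(k)}{A}`, where
`{S(k)} = {R,0} + {B}^H{P(k)}{B}`. -/
def riccatiIter (A : Bimatrix n n) (B : Bimatrix n m)
    (Q : Matrix (Fin n) (Fin n) ℂ) (R : Matrix (Fin m) (Fin m) ℂ) : ℕ → Bimatrix n n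
  | 0 => ⟨Q, 0⟩
  | k + 1 =>
    let P := riccatiIter A B Q R k
    ((Bimatrix.mk Q 0).add (A.conjT.mul (P.mul A))).sub
      (A.conjT.mul (P.mul (B.mul ((Smat B R P).inv.mul (B.conjT.mul (P.mul A))))))

namespace RiccatiAux

variable {ν μ : Type*} [Fintype ν] [DecidableEq ν] [Fintype μ] [DecidableEq μ]

def Sm (B : Matrix ν μ ℂ) (R : Matrix μ μ ℂ) (X : Matrix ν ν ℂ) : Matrix μ μ ℂ :=
  R + Bᴴ * X * B

def Fm (A : Matrix ν ν ℂ) (B : Matrix ν μ ℂ) (Q : Matrix ν ν ℂ) (R : Matrix μ μ ℂ)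
    (X : Matrix ν ν ℂ) : Matrix ν ν ℂ :=
  Q + Aᴴ * X * A - Aᴴ * X * B * (Sm B R X)⁻¹ * (Bᴴ * X * A)

def Km (A : Matrix ν ν ℂ) (B : Matrix ν μ ℂ) (R : Matrix μ μ ℂ)
    (X : Matrix ν ν ℂ) : Matrix μ ν ℂ :=
  -((Sm B R X)⁻¹ * (Bᴴ * X * A))

def Gm (A : Matrix ν ν ℂ) (B : Matrix ν μ ℂ) (Q : Matrix ν ν ℂ) (R : Matrix μ μ ℂ)
    (X : Matrix ν ν ℂ) (L : Matrix μ ν ℂ) : Matrix ν ν ℂ :=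
  Q + Lᴴ * R * L + (A + B * L)ᴴ * X * (A + B * L)

variable {A : Matrix ν ν ℂ} {B : Matrix ν μ ℂ} {Q : Matrix ν ν ℂ} {R : Matrix μ μ ℂ}

lemma Sm_posDef (hR : R.PosDef) {X : Matrix ν ν ℂ} (hX : X.PosSemidef) :
    (Sm B R X).PosDef :=
  hR.add_posSemidef (hX.conjTranspose_mul_mul_same B)

lemma Sm_herm (hR : R.PosDef) {X : Matrix ν ν ℂ} (hX : X.PosSemidef) :
    (Sm B R X)ᴴ = Sm B R X := (Sm_posDef hR hX).1

lemma Smi_herm (hR : R.PosDef) {X : Matrix ν ν ℂ} (hX : X.PosSemidef) :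
    ((Sm B R X)⁻¹)ᴴ = (Sm B R X)⁻¹ := (Sm_posDef hR hX).1.inv

lemma Smi_mul (hR : R.PosDef) {X : Matrix ν ν ℂ} (hX : X.PosSemidef) :
    (Sm B R X)⁻¹ * Sm B R X = 1 :=
  nonsing_inv_mul _ (Sm_posDef hR hX).det_pos.ne'.isUnit

lemma mul_Smi (hR : R.PosDef) {X : Matrix ν ν ℂ} (hX : X.PosSemidef) :
    Sm B R X * (Sm B R X)⁻¹ = 1 :=
  mul_nonsing_inv _ (Sm_posDef hR hX).det_pos.ne'.isUnit

/-- Completing the square, general form. -/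
lemma Gm_sub_Fm (hR : R.PosDef) {X : Matrix ν ν ℂ} (hX : X.PosSemidef)
    (L : Matrix μ ν ℂ) :
    Gm A B Q R X L - Fm A B Q R X
      = (L - Km A B R X)ᴴ * Sm B R X * (L - Km A B R X) := by
  have hXh : Xᴴ = X := hX.1
  have hWH : (Bᴴ * X * A)ᴴ = Aᴴ * X * B := by
    simp [conjTranspose_mul, hXh, Matrix.mul_assoc]
  have e1 : L - Km A B R X = L + (Sm B R X)⁻¹ * (Bᴴ * X * A) := by
    simp [Km, sub_eq_add_neg]
  rw [e1]
  have e2 : (L + (Sm B R X)⁻¹ * (Bᴴ * X * A))ᴴ = Lᴴ + (Aᴴ * X * B) * (Sm B R X)⁻¹ := by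
    rw [conjTranspose_add, conjTranspose_mul, Smi_herm hR hX, hWH]
  rw [e2]
  -- expand the RHS, collapsing S⁻¹ * S and S * S⁻¹
  have collapse1 : Aᴴ * X * B * (Sm B R X)⁻¹ * Sm B R X = Aᴴ * X * B := by
    rw [Matrix.mul_assoc (Aᴴ * X * B), Smi_mul hR hX, Matrix.mul_one]
  have collapse2 : Sm B R X * ((Sm B R X)⁻¹ * (Bᴴ * X * A)) = Bᴴ * X * A := by
    rw [← Matrix.mul_assoc, mul_Smi hR hX, Matrix.one_mul]
  rw [Matrix.add_mul, Matrix.add_mul, collapse1, Matrix.mul_add, Matrix.mul_add]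
  rw [Matrix.mul_assoc Lᴴ (Sm B R X) ((Sm B R X)⁻¹ * (Bᴴ * X * A)), collapse2]
  -- now the RHS is
  -- Lᴴ*(S*L) + Aᴴ*X*B*L + Lᴴ*(Bᴴ*X*A) + Aᴴ*X*B*(S⁻¹*(Bᴴ*X*A))
  simp only [Gm, Fm, Sm, Matrix.mul_add, Matrix.add_mul, conjTranspose_add,
    conjTranspose_mul, hXh, Matrix.mul_assoc]
  abel

lemma Fm_eq_Gm_Km (hR : R.PosDef) {X : Matrix ν ν ℂ} (hX : X.PosSemidef) :
    Fm A B Q R X = Gm A B Q R X (Km A B R X) := by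
  have h := Gm_sub_Fm (A := A) (B := B) (Q := Q) hR hX (Km A B R X)
  simp only [sub_self, conjTranspose_zero, Matrix.zero_mul, Matrix.mul_zero] at h
  rw [sub_eq_zero] at h
  exact h.symm

end RiccatiAux

namespace RiccatiAux2
open RiccatiAux

variable {ν μ : Type*} [Fintype ν] [DecidableEq ν] [Fintype μ] [DecidableEq μ]
variable {A : Matrix ν ν ℂ} {B : Matrix ν μ ℂ} {Q : Matrix ν ν ℂ} {R : Matrix μ μ ℂ}

lemma Gm_mono (L : Matrix μ ν ℂ) {X Y : Matrix ν ν ℂ}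
    (hXY : (Y - X).PosSemidef) :
    (Gm A B Q R Y L - Gm A B Q R X L).PosSemidef := by
  have h : Gm A B Q R Y L - Gm A B Q R X L
      = (A + B * L)ᴴ * (Y - X) * (A + B * L) := by
    simp only [Gm, Matrix.mul_sub, Matrix.sub_mul]
    abel
  rw [h]
  exact hXY.conjTranspose_mul_mul_same _

lemma Fm_mono (hR : R.PosDef) {X Y : Matrix ν ν ℂ}
    (hX : X.PosSemidef) (hY : Y.PosSemidef) (hXY : (Y - X).PosSemidef) :
    (Fm A B Q R Y - Fm A B Q R X).PosSemidef := by
  have h1 : (Gm A B Q R X (Km A B R Y) - Fm A B Q R X).PosSemidef := by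
    rw [Gm_sub_Fm hR hX]
    exact (Sm_posDef hR hX).posSemidef.conjTranspose_mul_mul_same _
  have h2 : (Gm A B Q R Y (Km A B R Y) - Gm A B Q R X (Km A B R Y)).PosSemidef :=
    Gm_mono _ hXY
  have h3 : Fm A B Q R Y - Fm A B Q R X
      = (Gm A B Q R Y (Km A B R Y) - Gm A B Q R X (Km A B R Y))
        + (Gm A B Q R X (Km A B R Y) - Fm A B Q R X) := by
    rw [Fm_eq_Gm_Km hR hY]; abel
  rw [h3]
  exact h2.add h1

lemma Fm_sub_Q_psd (hR : R.PosDef) {X : Matrix ν ν ℂ} (hX : X.PosSemidef) :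
    (Fm A B Q R X - Q).PosSemidef := by
  rw [Fm_eq_Gm_Km hR hX]
  have h : Gm A B Q R X (Km A B R X) - Q
      = (Km A B R X)ᴴ * R * Km A B R X
        + (A + B * Km A B R X)ᴴ * X * (A + B * Km A B R X) := by
    simp only [Gm]; abel
  rw [h]
  exact (hR.posSemidef.conjTranspose_mul_mul_same _).add
    (hX.conjTranspose_mul_mul_same _)

lemma Fm_posDef (hQ : Q.PosDef) (hR : R.PosDef) {X : Matrix ν ν ℂ}
    (hX : X.PosSemidef) : (Fm A B Q R X).PosDef := by
  have h : Fm A B Q R X = Q + (Fm A B Q R X - Q) := by abel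
  rw [h]
  exact hQ.add_posSemidef (Fm_sub_Q_psd hR hX)

/-- The matrix-level Riccati iterates. -/
def It (A : Matrix ν ν ℂ) (B : Matrix ν μ ℂ) (Q : Matrix ν ν ℂ) (R : Matrix μ μ ℂ) :
    ℕ → Matrix ν ν ℂ
  | 0 => Q
  | k + 1 => Fm A B Q R (It A B Q R k)

lemma It_posDef (hQ : Q.PosDef) (hR : R.PosDef) (k : ℕ) :
    (It A B Q R k).PosDef := by
  induction k with
  | zero => exact hQ
  | succ k ih => exact Fm_posDef hQ hR ih.posSemidef

lemma It_mono_succ (hQ : Q.PosDef) (hR : R.PosDef) (k : ℕ) :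
    (It A B Q R (k + 1) - It A B Q R k).PosSemidef := by
  induction k with
  | zero => exact Fm_sub_Q_psd hR hQ.posSemidef
  | succ k ih =>
    exact Fm_mono hR (It_posDef hQ hR k).posSemidef
      (It_posDef hQ hR (k + 1)).posSemidef ih

lemma It_mono (hQ : Q.PosDef) (hR : R.PosDef) {j k : ℕ} (h : j ≤ k) :
    (It A B Q R k - It A B Q R j).PosSemidef := by
  induction k with
  | zero =>
    rw [Nat.le_zero.mp h]
    simpa using (Matrix.PosSemidef.zero (n := ν) (R := ℂ))
  | succ k ih =>
    rcases Nat.lt_or_ge j (k+1) with h' | h'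
    · have h1 := ih (Nat.lt_succ_iff.mp h')
      have h2 := It_mono_succ (A := A) (B := B) hQ hR k
      have : It A B Q R (k+1) - It A B Q R j
          = (It A B Q R (k+1) - It A B Q R k) + (It A B Q R k - It A B Q R j) := by
        abel
      rw [this]; exact h2.add h1
    · have : j = k + 1 := le_antisymm h h'
      rw [this]
      simpa using (Matrix.PosSemidef.zero (n := ν) (R := ℂ))

lemma It_le_fixed (hQ : Q.PosDef) (hR : R.PosDef) {P : Matrix ν ν ℂ}
    (hP : P.PosSemidef) (hfix : Fm A B Q R P = P) (k : ℕ) :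
    (P - It A B Q R k).PosSemidef := by
  induction k with
  | zero =>
    have := Fm_sub_Q_psd (A := A) (B := B) (Q := Q) hR hP
    rwa [hfix] at this
  | succ k ih =>
    have := Fm_mono (A := A) (B := B) (Q := Q) hR
      (It_posDef hQ hR k).posSemidef hP ih
    rwa [show Fm A B Q R P = P from hfix] at this

end RiccatiAux2



namespace RiccatiAux

variable {ν : Type*} [Fintype ν] [DecidableEq ν]

lemma entry_eq (M : Matrix ν ν ℂ) (i j : ν) :
    star (Pi.single i (1:ℂ)) ⬝ᵥ M *ᵥ Pi.single j 1 = M i j := by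
  simp [dotProduct, Matrix.mulVec_single, Pi.single_apply, apply_ite]

lemma hconj_dot {M : Matrix ν ν ℂ} (hM : Mᴴ = M) (u v : ν → ℂ) :
    star (star u ⬝ᵥ M *ᵥ v) = star v ⬝ᵥ M *ᵥ u := by
  rw [star_dotProduct u (M *ᵥ v), star_star, star_mulVec, hM, ← dotProduct_mulVec]

/-- Polarization identity. -/
lemma polarize (M : Matrix ν ν ℂ) (u v : ν → ℂ) :
    star u ⬝ᵥ M *ᵥ v =
      ((star (u + v) ⬝ᵥ M *ᵥ (u + v)) - (star u ⬝ᵥ M *ᵥ u) - (star v ⬝ᵥ M *ᵥ v)) / 2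
        - Complex.I * ((star (u + Complex.I • v) ⬝ᵥ M *ᵥ (u + Complex.I • v))
          - (star u ⬝ᵥ M *ᵥ u) - (star v ⬝ᵥ M *ᵥ v)) / 2 := by
  have e1 : star (u + v) ⬝ᵥ M *ᵥ (u + v)
      = (star u ⬝ᵥ M *ᵥ u) + (star u ⬝ᵥ M *ᵥ v) + (star v ⬝ᵥ M *ᵥ u)
        + (star v ⬝ᵥ M *ᵥ v) := by
    simp only [star_add, add_dotProduct, Matrix.mulVec_add, dotProduct_add]
    ring
  have e2 : star (u + Complex.I • v) ⬝ᵥ M *ᵥ (u + Complex.I • v)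
      = (star u ⬝ᵥ M *ᵥ u) + (star v ⬝ᵥ M *ᵥ v)
        + Complex.I * (star u ⬝ᵥ M *ᵥ v) - Complex.I * (star v ⬝ᵥ M *ᵥ u) := by
    simp only [star_add, star_smul, add_dotProduct, Matrix.mulVec_add, dotProduct_add,
      Matrix.mulVec_smul, smul_dotProduct, dotProduct_smul, smul_eq_mul,
      Complex.star_def, Complex.conj_I]
    linear_combination (-(star v ⬝ᵥ M *ᵥ v)) * Complex.I_mul_I
  rw [e1, e2]
  linear_combination ((star u ⬝ᵥ M *ᵥ v) - (star v ⬝ᵥ M *ᵥ u)) / 2 * Complex.I_mul_I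

/-- A limit of positive semidefinite matrices is positive semidefinite. -/
lemma psd_of_tendsto {X : ℕ → Matrix ν ν ℂ} {Y : Matrix ν ν ℂ}
    (h : Tendsto X atTop (𝓝 Y)) (hX : ∀ k, (X k).PosSemidef) : Y.PosSemidef := by
  have hent : ∀ i j, Tendsto (fun k => X k i j) atTop (𝓝 (Y i j)) := fun i j =>
    tendsto_pi_nhds.1 (tendsto_pi_nhds.1 h i) j
  refine Matrix.PosSemidef.of_dotProduct_mulVec_nonneg ?_ ?_
  · ext i j
    rw [conjTranspose_apply]
    have h1 : Tendsto (fun k => star (X k j i)) atTop (𝓝 (star (Y j i))) :=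
      (continuous_star.tendsto _).comp (hent j i)
    have h2 : (fun k => star (X k j i)) = fun k => X k i j := by
      funext k
      have := congrFun (congrFun ((hX k).1) i) j
      rwa [conjTranspose_apply] at this
    rw [h2] at h1
    exact tendsto_nhds_unique h1 (hent i j)
  · intro x
    have hc : Continuous fun M : Matrix ν ν ℂ => star x ⬝ᵥ M *ᵥ x :=
      continuous_const.dotProduct (continuous_id.matrix_mulVec continuous_const)
    have h' : Tendsto (fun k => star x ⬝ᵥ X k *ᵥ x) atTop (𝓝 (star x ⬝ᵥ Y *ᵥ x)) :=
      (hc.tendsto _).comp h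
    exact ge_of_tendsto h' (Eventually.of_forall fun k => (hX k).dotProduct_mulVec_nonneg x)

end RiccatiAux

namespace RiccatiAux3
open RiccatiAux RiccatiAux2

variable {ν μ : Type*} [Fintype ν] [DecidableEq ν] [Fintype μ] [DecidableEq μ]
variable {A : Matrix ν ν ℂ} {B : Matrix ν μ ℂ} {Q : Matrix ν ν ℂ} {R : Matrix μ μ ℂ}

/-- Main matrix-level convergence: the Riccati iterates converge to a positive
definite fixed point of the Riccati operator. -/
theorem It_conv (hQ : Q.PosDef) (hR : R.PosDef) {P : Matrix ν ν ℂ}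
    (hP : P.PosSemidef) (hfix : Fm A B Q R P = P) :
    ∃ Z : Matrix ν ν ℂ, Tendsto (It A B Q R) atTop (𝓝 Z) ∧ Z.PosDef ∧
      Fm A B Q R Z = Z := by
  set X := It (A := A) (B := B) Q R with hXdef
  -- quadratic forms
  set q : ℕ → (ν → ℂ) → ℂ := fun k x => star x ⬝ᵥ X k *ᵥ x with hq
  have hqle : ∀ k x, 0 ≤ q k x := fun k x => (It_posDef hQ hR k).posSemidef.dotProduct_mulVec_nonneg x
  have him : ∀ k x, (q k x).im = 0 := fun k x => ((Complex.le_def.1 (hqle k x)).2).symm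
  set r : ℕ → (ν → ℂ) → ℝ := fun k x => (q k x).re with hr
  have hqr : ∀ k x, q k x = ((r k x : ℝ) : ℂ) := by
    intro k x
    apply Complex.ext
    · simp [hr]
    · simp [hr, him k x]
  have hdiff : ∀ (M N : Matrix ν ν ℂ) (x : ν → ℂ),
      star x ⬝ᵥ (M - N) *ᵥ x = star x ⬝ᵥ M *ᵥ x - star x ⬝ᵥ N *ᵥ x := by
    intro M N x; rw [Matrix.sub_mulVec, dotProduct_sub]
  have hmono : ∀ x, Monotone fun k => r k x := by
    intro x
    apply monotone_nat_of_le_succ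
    intro k
    have h1 := (It_mono_succ (A := A) (B := B) hQ hR k).dotProduct_mulVec_nonneg x
    rw [hdiff] at h1
    have := (Complex.le_def.1 h1).1
    simp only [Complex.zero_re, Complex.sub_re] at this
    simpa [hr, hq] using this
  have hbdd : ∀ x, BddAbove (Set.range fun k => r k x) := by
    intro x
    refine ⟨(star x ⬝ᵥ P *ᵥ x).re, ?_⟩
    rintro y ⟨k, rfl⟩
    have h1 := (It_le_fixed (A := A) (B := B) hQ hR hP hfix k).dotProduct_mulVec_nonneg x
    rw [hdiff] at h1
    have := (Complex.le_def.1 h1).1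
    simp only [Complex.zero_re, Complex.sub_re] at this
    simp only [hr, hq]
    linarith
  set L : (ν → ℂ) → ℝ := fun x => ⨆ k, r k x with hL
  have hrL : ∀ x, Tendsto (fun k => r k x) atTop (𝓝 (L x)) := fun x =>
    tendsto_atTop_ciSup (hmono x) (hbdd x)
  have hqL : ∀ x, Tendsto (fun k => q k x) atTop (𝓝 ((L x : ℝ) : ℂ)) := by
    intro x
    have : (fun k => q k x) = fun k => ((r k x : ℝ) : ℂ) := funext fun k => hqr k x
    rw [this]
    exact (Complex.continuous_ofReal.tendsto _).comp (hrL x)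
  -- the limit matrix via polarization
  set e : ν → (ν → ℂ) := fun i => Pi.single i 1 with he
  set Z : Matrix ν ν ℂ := fun i j =>
    (((L (e i + e j) : ℝ) : ℂ) - ((L (e i) : ℝ) : ℂ) - ((L (e j) : ℝ) : ℂ)) / 2
      - Complex.I * (((L (e i + Complex.I • e j) : ℝ) : ℂ) - ((L (e i) : ℝ) : ℂ)
        - ((L (e j) : ℝ) : ℂ)) / 2 with hZdef
  have hent : ∀ i j, Tendsto (fun k => X k i j) atTop (𝓝 (Z i j)) := by
    intro i j
    have hrw : (fun k => X k i j) = fun k =>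
        (q k (e i + e j) - q k (e i) - q k (e j)) / 2
          - Complex.I * (q k (e i + Complex.I • e j) - q k (e i) - q k (e j)) / 2 := by
      funext k
      rw [← entry_eq (X k) i j]
      exact polarize (X k) (e i) (e j)
    rw [hrw]
    exact ((((hqL _).sub (hqL _)).sub (hqL _)).div_const 2).sub
      ((((((hqL _).sub (hqL _)).sub (hqL _))).const_mul Complex.I).div_const 2)
  have hZt : Tendsto X atTop (𝓝 Z) :=
    tendsto_pi_nhds.2 fun i => tendsto_pi_nhds.2 fun j => hent i j
  -- Z is positive definite
  have hZpsd : Z.PosSemidef :=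
    psd_of_tendsto hZt fun k => (It_posDef hQ hR k).posSemidef
  have hZQ : (Z - Q).PosSemidef := by
    have h0 : ∀ k, (X k - Q).PosSemidef := by
      intro k
      have := It_mono (A := A) (B := B) hQ hR (Nat.zero_le k)
      simpa [It] using this
    exact psd_of_tendsto (hZt.sub tendsto_const_nhds) h0
  have hZpos : Z.PosDef := by
    have : Z = Q + (Z - Q) := by abel
    rw [this]
    exact hQ.add_posSemidef hZQ
  -- Z is a fixed point
  have hSZ : (Sm B R Z).PosDef := Sm_posDef hR hZpsd
  have hdet : (Sm B R Z).det ≠ 0 := hSZ.det_pos.ne'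
  have hSmC : Continuous fun M : Matrix ν ν ℂ => Sm B R M := by
    unfold Sm
    exact continuous_const.add ((continuous_const.matrix_mul continuous_id).matrix_mul
      continuous_const)
  have hSmt : Tendsto (fun k => Sm B R (X k)) atTop (𝓝 (Sm B R Z)) :=
    (hSmC.tendsto _).comp hZt
  have hinvt : Tendsto (fun k => (Sm B R (X k))⁻¹) atTop (𝓝 ((Sm B R Z)⁻¹)) := by
    have hrw : ∀ M : Matrix μ μ ℂ, M⁻¹ = M.det⁻¹ • M.adjugate := by
      intro M
      rw [Matrix.inv_def, Ring.inverse_eq_inv']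
    simp only [hrw]
    exact (((Continuous.matrix_det continuous_id).tendsto _).comp hSmt |>.inv₀ hdet).smul
      (((Continuous.matrix_adjugate continuous_id).tendsto _).comp hSmt)
  have hFmt : Tendsto (fun k => Fm A B Q R (X k)) atTop (𝓝 (Fm A B Q R Z)) := by
    have hg : Continuous fun p : Matrix ν ν ℂ × Matrix μ μ ℂ =>
        Q + Aᴴ * p.1 * A - Aᴴ * p.1 * B * p.2 * (Bᴴ * p.1 * A) := by
      have c1 : Continuous fun p : Matrix ν ν ℂ × Matrix μ μ ℂ => p.1 := continuous_fst
      have c2 : Continuous fun p : Matrix ν ν ℂ × Matrix μ μ ℂ => p.2 := continuous_snd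
      exact (continuous_const.add ((continuous_const.matrix_mul c1).matrix_mul
        continuous_const)).sub (((((continuous_const.matrix_mul c1).matrix_mul
          continuous_const).matrix_mul c2).matrix_mul
            (((continuous_const.matrix_mul c1).matrix_mul continuous_const))))
    have hpair : Tendsto (fun k => (X k, (Sm B R (X k))⁻¹)) atTop
        (𝓝 (Z, (Sm B R Z)⁻¹)) := hZt.prodMk_nhds hinvt
    have := (hg.tendsto _).comp hpair
    simpa [Fm, Function.comp_def] using this
  have hXsucc : Tendsto (fun k => X (k + 1)) atTop (𝓝 Z) :=
    hZt.comp (tendsto_add_atTop_nat 1)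
  have heq : (fun k => Fm A B Q R (X k)) = fun k => X (k + 1) := rfl
  rw [heq] at hFmt
  exact ⟨Z, hZt, hZpos, tendsto_nhds_unique hFmt hXsucc⟩

end RiccatiAux3

namespace RiccatiTransfer

open Bimatrix

/-! ### `mconj` basics -/

@[simp] lemma mconj_apply {k l : Type*} (A : Matrix k l ℂ) (i j) :
    mconj A i j = star (A i j) := rfl

lemma mconj_add {k l : Type*} (A B : Matrix k l ℂ) :
    mconj (A + B) = mconj A + mconj B := by
  ext i j; simp

lemma mconj_zero {k l : Type*} : mconj (0 : Matrix k l ℂ) = 0 := by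
  ext i j; simp

lemma mconj_one {k : Type*} [Fintype k] [DecidableEq k] :
    mconj (1 : Matrix k k ℂ) = 1 := by
  ext i j
  by_cases h : i = j <;> simp [Matrix.one_apply, h]

lemma mconj_mul {k l p : Type*} [Fintype l] (A : Matrix k l ℂ) (B : Matrix l p ℂ) :
    mconj (A * B) = mconj A * mconj B := by
  ext i j
  simp [Matrix.mul_apply, mconj, Matrix.map_apply, star_sum]

lemma mconj_mconj {k l : Type*} (A : Matrix k l ℂ) : mconj (mconj A) = A := by
  ext i j; simp

lemma mconj_transpose {k l : Type*} (A : Matrix k l ℂ) : mconj Aᵀ = Aᴴ := by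
  ext i j; simp [Matrix.conjTranspose_apply]

lemma conjT_mconj {k l : Type*} (A : Matrix k l ℂ) : (mconj A)ᴴ = Aᵀ := by
  ext i j; simp [Matrix.conjTranspose_apply]

lemma mconj_conjTranspose {k l : Type*} (A : Matrix k l ℂ) : mconj Aᴴ = Aᵀ := by
  ext i j; simp [Matrix.conjTranspose_apply]

lemma mconj_mulVec {k l : Type*} [Fintype l] (M : Matrix k l ℂ) (y : l → ℂ) :
    mconj M *ᵥ star y = star (M *ᵥ y) := by
  funext i
  simp [Matrix.mulVec, dotProduct, star_sum, star_mul']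

/-! ### the rectangular complex-matrix representation -/

variable {k l p : ℕ}

/-- Rectangular version of `Bimatrix.toMat`. -/
def toM (A : Bimatrix k l) : Matrix (Fin k ⊕ Fin k) (Fin l ⊕ Fin l) ℂ :=
  Matrix.fromBlocks A.fst (mconj A.snd) A.snd (mconj A.fst)

lemma toMat_eq_toM (S : Bimatrix k k) : S.toMat = toM S := rfl

lemma toM_inj {A B : Bimatrix k l} (h : toM A = toM B) : A = B := by
  have h1 := congrArg Matrix.toBlocks₁₁ h
  have h2 := congrArg Matrix.toBlocks₂₁ h
  simp only [toM, Matrix.toBlocks_fromBlocks₁₁, Matrix.toBlocks_fromBlocks₂₁] at h1 h2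
  cases A; cases B
  simp_all

lemma toM_add (A B : Bimatrix k l) : toM (A.add B) = toM A + toM B := by
  simp [toM, Bimatrix.add, Matrix.fromBlocks_add, mconj_add]

lemma toM_sub (A B : Bimatrix k l) : toM (A.sub B) = toM A - toM B := by
  have h : A.sub B = ⟨A.fst - B.fst, A.snd - B.snd⟩ := rfl
  rw [h]
  ext i j
  cases i <;> cases j <;> simp [toM, Matrix.fromBlocks]

lemma toM_neg (A : Bimatrix k l) : toM A.neg = -toM A := by
  ext i j
  cases i <;> cases j <;> simp [toM, Bimatrix.neg, Matrix.fromBlocks]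

lemma toM_one : toM (Bimatrix.one k) = 1 := by
  simp [toM, Bimatrix.one, mconj_zero, mconj_one, Matrix.fromBlocks_one]

lemma toM_mul (A : Bimatrix k l) (B : Bimatrix l p) :
    toM (A.mul B) = toM A * toM B := by
  simp only [toM, Bimatrix.mul, Matrix.fromBlocks_multiply, mconj_add, mconj_mul,
    mconj_mconj]
  abel

lemma toM_conjT (A : Bimatrix k l) : toM A.conjT = (toM A)ᴴ := by
  simp only [toM, Bimatrix.conjT, Matrix.fromBlocks_conjTranspose, conjT_mconj,
    mconj_conjTranspose, mconj_transpose]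

/-! ### the inverse transfers -/

lemma map_conj_inv {k : Type*} [Fintype k] [DecidableEq k]
    (M : Matrix k k ℂ) :
    (M.map (starRingEnd ℂ))⁻¹ = M⁻¹.map (starRingEnd ℂ) := by
  have h1 : ((starRingEnd ℂ).mapMatrix M) = M.map (starRingEnd ℂ) := rfl
  rw [Matrix.inv_def, Matrix.inv_def, ← h1, ← RingHom.map_det, ← RingHom.map_adjugate]
  ext i j
  simp only [Matrix.map_apply, Matrix.smul_apply, smul_eq_mul, Ring.inverse_eq_inv',
    RingHom.mapMatrix_apply]
  rw [_root_.map_mul, map_inv₀]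

lemma map_conj_eq_mconj {k l : Type*} (A : Matrix k l ℂ) :
    A.map ⇑(starRingEnd ℂ) = mconj A := rfl

lemma mconj_fromBlocks {a b c d : Type*} (A : Matrix a b ℂ) (B : Matrix a c ℂ)
    (C : Matrix d b ℂ) (D : Matrix d c ℂ) :
    mconj (Matrix.fromBlocks A B C D)
      = Matrix.fromBlocks (mconj A) (mconj B) (mconj C) (mconj D) :=
  Matrix.fromBlocks_map A B C D _

def Jm (k : ℕ) : Matrix (Fin k ⊕ Fin k) (Fin k ⊕ Fin k) ℂ :=
  Matrix.fromBlocks 0 1 1 0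

lemma Jm_mul_Jm : Jm k * Jm k = 1 := by
  simp [Jm, Matrix.fromBlocks_multiply, Matrix.fromBlocks_one]

lemma Jm_inv : (Jm k)⁻¹ = Jm k := inv_eq_right_inv Jm_mul_Jm

lemma toM_struct (S : Bimatrix k k) :
    Jm k * (toM S).map (starRingEnd ℂ) * Jm k = toM S := by
  unfold Jm toM
  rw [map_conj_eq_mconj, mconj_fromBlocks]
  simp [Matrix.fromBlocks_multiply, mconj_mconj]

lemma toM_inv (S : Bimatrix k k) : toM S.inv = (toM S)⁻¹ := by
  have hstruct : (toM S)⁻¹ = Jm k * ((toM S)⁻¹).map (starRingEnd ℂ) * Jm k := by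
    conv_lhs => rw [← toM_struct S]
    rw [Matrix.mul_inv_rev, Matrix.mul_inv_rev, Jm_inv, map_conj_inv,
      ← Matrix.mul_assoc]
  set N := (toM S)⁻¹ with hN
  have hblocks : N = Matrix.fromBlocks N.toBlocks₁₁ N.toBlocks₁₂ N.toBlocks₂₁
      N.toBlocks₂₂ := (Matrix.fromBlocks_toBlocks N).symm
  have hstruct2 : N = Matrix.fromBlocks (mconj N.toBlocks₂₂) (mconj N.toBlocks₂₁)
      (mconj N.toBlocks₁₂) (mconj N.toBlocks₁₁) := by
    conv_lhs => rw [hstruct]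
    conv_lhs => rw [hblocks]
    unfold Jm
    rw [map_conj_eq_mconj, mconj_fromBlocks]
    simp [Matrix.fromBlocks_multiply]
  have h12 : N.toBlocks₁₂ = mconj N.toBlocks₂₁ := by
    conv_lhs => rw [hstruct2]
    simp [Matrix.toBlocks_fromBlocks₁₂]
  have h22 : N.toBlocks₂₂ = mconj N.toBlocks₁₁ := by
    conv_lhs => rw [hstruct2]
    simp [Matrix.toBlocks_fromBlocks₂₂]
  show Matrix.fromBlocks N.toBlocks₁₁ (mconj N.toBlocks₂₁) N.toBlocks₂₁
      (mconj N.toBlocks₁₁) = N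
  rw [← h12, ← h22]
  exact Matrix.fromBlocks_toBlocks N

end RiccatiTransfer

namespace RiccatiTransfer

open Bimatrix

variable {k l : ℕ}

lemma star_elim (x y : Fin k → ℂ) :
    star (Sum.elim x y) = Sum.elim (star x) (star y) := by
  funext i; cases i <;> rfl

lemma mulVec_toM (P : Bimatrix k l) (x y : Fin l → ℂ) :
    toM P *ᵥ Sum.elim x y
      = Sum.elim (P.fst *ᵥ x + mconj P.snd *ᵥ y) (P.snd *ᵥ x + mconj P.fst *ᵥ y) := by
  rw [toM, Matrix.fromBlocks_mulVec]
  rfl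

/-- The sesquilinear form of `toM P` on "real-type" vectors is a sum `t + star t`. -/
lemma bilin_toM (P : Bimatrix k k) (x y : Fin k → ℂ) :
    star (Sum.elim x (star x)) ⬝ᵥ toM P *ᵥ Sum.elim y (star y)
      = (star x ⬝ᵥ (P.fst *ᵥ y + mconj P.snd *ᵥ star y))
        + star (star x ⬝ᵥ (P.fst *ᵥ y + mconj P.snd *ᵥ star y)) := by
  rw [mulVec_toM, star_elim, star_star, sumElim_dotProduct_sumElim]
  congr 1
  have h1 : star (P.fst *ᵥ y + mconj P.snd *ᵥ star y)
      = mconj P.fst *ᵥ star y + P.snd *ᵥ y := by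
    rw [star_add, ← mconj_mulVec P.fst y]
    congr 1
    rw [show mconj P.snd *ᵥ star y = star (P.snd *ᵥ y) from mconj_mulVec _ _, star_star]
  rw [← star_dotProduct_star, star_star, h1, add_comm]
  exact dotProduct_comm _ _

lemma quad_toM (P : Bimatrix k k) (x : Fin k → ℂ) :
    star (Sum.elim x (star x)) ⬝ᵥ toM P *ᵥ Sum.elim x (star x)
      = (star x ⬝ᵥ P.apply x) + star (star x ⬝ᵥ P.apply x) :=
  bilin_toM P x x

lemma self_add_star_re (s : ℂ) : (s + star s).re = 2 * s.re := by
  simp [Complex.add_re]; ring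

lemma self_add_star_im (s : ℂ) : (s + star s).im = 0 := by
  simp [Complex.add_im]

lemma conjT_eq_self {P : Bimatrix k k} (hP : P.IsHermitian) : P.conjT = P := by
  obtain ⟨h1, h2⟩ := hP
  cases P
  simp only [Bimatrix.conjT] at h1 h2 ⊢
  rw [h1, h2]

lemma herm_toM {P : Bimatrix k k} (hP : P.IsHermitian) : (toM P)ᴴ = toM P := by
  rw [← toM_conjT, conjT_eq_self hP]

lemma herm_of_toM {P : Bimatrix k k} (h : (toM P)ᴴ = toM P) : P.IsHermitian := by
  rw [← toM_conjT] at h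
  have := toM_inj h
  constructor
  · exact congrArg Bimatrix.fst this
  · exact congrArg Bimatrix.snd this

/-- Forward direction: a positive definite bimatrix has positive definite
matrix representation. -/
lemma posDef_toM {P : Bimatrix k k} (hP : P.PosDef) : (toM P).PosDef := by
  obtain ⟨hH, hpsd, hpos⟩ := hP
  have hherm : (toM P)ᴴ = toM P := herm_toM hH
  refine Matrix.PosDef.of_dotProduct_mulVec_pos hherm ?_
  intro z hz
  set u : Fin k → ℂ := z ∘ Sum.inl with hu
  set v : Fin k → ℂ := z ∘ Sum.inr with hv
  set x : Fin k → ℂ := fun a => (u a + star (v a)) / 2 with hx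
  set y : Fin k → ℂ := fun a => -Complex.I * (u a - star (v a)) / 2 with hy
  set w₁ : Fin k ⊕ Fin k → ℂ := Sum.elim x (star x) with hw₁
  set w₂ : Fin k ⊕ Fin k → ℂ := Sum.elim y (star y) with hw₂
  have hz' : z = w₁ + Complex.I • w₂ := by
    funext i
    cases i with
    | inl a =>
      show u a = x a + Complex.I * y a
      rw [hx, hy]
      field_simp
      simp only [Complex.star_def, Complex.conj_conj]
      linear_combination (u a - (starRingEnd ℂ) (v a)) * Complex.I_mul_I
    | inr a =>
      show v a = star (x a) + Complex.I * star (y a)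
      rw [hx, hy]
      push_cast
      simp only [star_div₀, star_add, star_sub, star_mul', star_neg, star_star,
        Complex.star_def, Complex.conj_I, Complex.conj_ofNat]
      field_simp
      simp only [Complex.star_def, Complex.conj_conj]
      linear_combination (-((starRingEnd ℂ) (u a)) + v a) * Complex.I_mul_I
  set M := toM P with hM
  have expand : star (w₁ + Complex.I • w₂) ⬝ᵥ M *ᵥ (w₁ + Complex.I • w₂)
      = (star w₁ ⬝ᵥ M *ᵥ w₁) + (star w₂ ⬝ᵥ M *ᵥ w₂)
        + Complex.I * (star w₁ ⬝ᵥ M *ᵥ w₂) - Complex.I * (star w₂ ⬝ᵥ M *ᵥ w₁) := by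
    simp only [star_add, star_smul, add_dotProduct, Matrix.mulVec_add,
      dotProduct_add, Matrix.mulVec_smul, smul_dotProduct, dotProduct_smul,
      smul_eq_mul, Complex.star_def, Complex.conj_I]
    linear_combination (-(star w₂ ⬝ᵥ M *ᵥ w₂)) * Complex.I_mul_I
  have hcross : star w₂ ⬝ᵥ M *ᵥ w₁ = star w₁ ⬝ᵥ M *ᵥ w₂ := by
    rw [← RiccatiAux.hconj_dot hherm w₁ w₂]
    rw [hw₁, hw₂, bilin_toM]
    rw [star_add, star_star, add_comm]
  rw [hz', expand, hcross]
  have hq1 := quad_toM P x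
  have hq2 := quad_toM P y
  rw [← hw₁] at hq1
  rw [← hw₂] at hq2
  have him : (star w₁ ⬝ᵥ M *ᵥ w₁ + star w₂ ⬝ᵥ M *ᵥ w₂
      + Complex.I * (star w₁ ⬝ᵥ M *ᵥ w₂) - Complex.I * (star w₁ ⬝ᵥ M *ᵥ w₂))
      = star w₁ ⬝ᵥ M *ᵥ w₁ + star w₂ ⬝ᵥ M *ᵥ w₂ := by ring
  rw [him, hq1, hq2]
  -- positivity
  have hxy : x ≠ 0 ∨ y ≠ 0 := by
    by_contra h
    push_neg at h
    obtain ⟨h1, h2⟩ := h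
    apply hz
    rw [hz', hw₁, hw₂, h1, h2]
    funext i
    cases i <;> simp
  rw [Complex.lt_def]
  have e1 : (star x ⬝ᵥ P.apply x + star (star x ⬝ᵥ P.apply x)).re
      = 2 * P.quadForm x := self_add_star_re _
  have e2 : (star y ⬝ᵥ P.apply y + star (star y ⬝ᵥ P.apply y)).re
      = 2 * P.quadForm y := self_add_star_re _
  constructor
  · rw [Complex.zero_re, Complex.add_re, e1, e2]
    cases hxy with
    | inl h => nlinarith [hpos x h, hpsd y]
    | inr h => nlinarith [hpos y h, hpsd x]
  · rw [Complex.zero_im, Complex.add_im, self_add_star_im, self_add_star_im]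
    norm_num

/-- Backward direction. -/
lemma posDef_of_toM {P : Bimatrix k k} (h : (toM P).PosDef) : P.PosDef := by
  refine ⟨herm_of_toM h.1, ?_, ?_⟩
  · intro x
    have := h.posSemidef.dotProduct_mulVec_nonneg (Sum.elim x (star x))
    rw [quad_toM] at this
    have hre := (Complex.le_def.1 this).1
    rw [Complex.zero_re, self_add_star_re] at hre
    show 0 ≤ (star x ⬝ᵥ P.apply x).re
    linarith
  · intro x hx
    have hw : Sum.elim x (star x) ≠ 0 := by
      intro hc
      apply hx
      funext a
      exact congrFun hc (Sum.inl a)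
    have := h.dotProduct_mulVec_pos hw
    rw [quad_toM] at this
    have hre := (Complex.lt_def.1 this).1
    rw [Complex.zero_re, self_add_star_re] at hre
    show 0 < (star x ⬝ᵥ P.apply x).re
    linarith

/-- The block embedding of an ordinary posdef matrix is posdef (as a bimatrix). -/
lemma mk_posDef {Q : Matrix (Fin k) (Fin k) ℂ} (hQ : Q.PosDef) :
    (Bimatrix.mk Q 0).PosDef := by
  have happ : ∀ x : Fin k → ℂ, (Bimatrix.mk Q 0).apply x = Q *ᵥ x := by
    intro x
    show Q *ᵥ x + mconj 0 *ᵥ star x = Q *ᵥ x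
    rw [mconj_zero]
    simp
  refine ⟨⟨hQ.1, by simp⟩, ?_, ?_⟩
  · intro x
    show 0 ≤ (star x ⬝ᵥ (Bimatrix.mk Q 0).apply x).re
    rw [happ]
    have := hQ.posSemidef.dotProduct_mulVec_nonneg x
    exact (Complex.le_def.1 this).1
  · intro x hx
    show 0 < (star x ⬝ᵥ (Bimatrix.mk Q 0).apply x).re
    rw [happ]
    have := hQ.dotProduct_mulVec_pos hx
    exact (Complex.lt_def.1 this).1

end RiccatiTransfer

namespace RiccatiTransfer

open Bimatrix RiccatiAux RiccatiAux2 RiccatiAux3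

variable {n m : ℕ}

lemma toM_Smat (B : Bimatrix n m) (R : Matrix (Fin m) (Fin m) ℂ) (P : Bimatrix n n) :
    toM (Smat B R P) = Sm (toM B) (toM (Bimatrix.mk R 0)) (toM P) := by
  rw [Smat, toM_add, toM_mul, toM_mul, toM_conjT, Sm, Matrix.mul_assoc]

lemma riccati_toM {A : Bimatrix n n} {B : Bimatrix n m}
    {Q : Matrix (Fin n) (Fin n) ℂ} {R : Matrix (Fin m) (Fin m) ℂ} {P : Bimatrix n n}
    (h : RiccatiEq A B Q R P) :
    Fm (toM A) (toM B) (toM (Bimatrix.mk Q 0)) (toM (Bimatrix.mk R 0)) (toM P)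
      = toM P := by
  obtain ⟨T, ⟨hST, hTS⟩, heq⟩ := h
  have h1 : toM (Smat B R P) * toM T = 1 := by rw [← toM_mul, hST, toM_one]
  have hTinv : (Sm (toM B) (toM (Bimatrix.mk R 0)) (toM P))⁻¹ = toM T := by
    rw [← toM_Smat]; exact inv_eq_right_inv h1
  have heqM := congrArg toM heq
  simp only [toM_neg, toM_sub, toM_mul, toM_conjT] at heqM
  rw [Fm, hTinv]
  simp only [Matrix.mul_assoc] at heqM ⊢
  set a := toM (Bimatrix.mk Q 0) with ha
  set t1 := (toM A)ᴴ * (toM P * toM A) with ht1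
  set t2 := (toM A)ᴴ * (toM P * (toM B * (toM T * ((toM B)ᴴ * (toM P * toM A)))))
    with ht2
  rw [← sub_eq_zero, show a + t1 - t2 - toM P = -(-a - (t1 - toM P - t2)) from by abel,
    show -a = t1 - toM P - t2 from by rw [heqM], sub_self, neg_zero]

lemma toM_iter {A : Bimatrix n n} {B : Bimatrix n m}
    {Q : Matrix (Fin n) (Fin n) ℂ} {R : Matrix (Fin m) (Fin m) ℂ}
    (k : ℕ) :
    toM (riccatiIter A B Q R k)
      = It (toM A) (toM B) (toM (Bimatrix.mk Q 0)) (toM (Bimatrix.mk R 0)) k := by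
  induction k with
  | zero => rfl
  | succ k ih =>
    show toM (((Bimatrix.mk Q 0).add
        (A.conjT.mul ((riccatiIter A B Q R k).mul A))).sub
      (A.conjT.mul ((riccatiIter A B Q R k).mul (B.mul
        ((Smat B R (riccatiIter A B Q R k)).inv.mul
          (B.conjT.mul ((riccatiIter A B Q R k).mul A)))))))
      = Fm (toM A) (toM B) (toM (Bimatrix.mk Q 0)) (toM (Bimatrix.mk R 0))
          (It (toM A) (toM B) (toM (Bimatrix.mk Q 0)) (toM (Bimatrix.mk R 0)) k)
    simp only [toM_sub, toM_add, toM_mul, toM_conjT, toM_inv, toM_Smat, ih, Fm]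
    simp only [Matrix.mul_assoc]

end RiccatiTransfer

namespace RiccatiTransfer

open Bimatrix RiccatiAux RiccatiAux2 RiccatiAux3

variable {n m : ℕ}

theorem main (A : Bimatrix n n) (B : Bimatrix n m)
    (Q : Matrix (Fin n) (Fin n) ℂ) (R : Matrix (Fin m) (Fin m) ℂ)
    (hQ : Q.PosDef) (hR : R.PosDef)
    (P : Bimatrix n n) (hP : P.PosDef ∧ RiccatiEq A B Q R P)
    (huniq : ∀ P' : Bimatrix n n, P'.PosDef ∧ RiccatiEq A B Q R P' → P' = P) :
    Tendsto (fun k => (riccatiIter A B Q R k).fst) atTop (𝓝 P.fst) ∧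
    Tendsto (fun k => (riccatiIter A B Q R k).snd) atTop (𝓝 P.snd) := by
  obtain ⟨hPpos, hPricc⟩ := hP
  have hQb : (toM (Bimatrix.mk Q 0)).PosDef := posDef_toM (mk_posDef hQ)
  have hRb : (toM (Bimatrix.mk R 0)).PosDef := posDef_toM (mk_posDef hR)
  have hPm : (toM P).PosDef := posDef_toM hPpos
  have hfix := riccati_toM hPricc
  obtain ⟨Z, hZt, hZpos, hZfix⟩ := It_conv hQb hRb hPm.posSemidef hfix
  have hIt : ∀ k, toM (riccatiIter A B Q R k)
      = It (toM A) (toM B) (toM (Bimatrix.mk Q 0)) (toM (Bimatrix.mk R 0)) k :=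
    fun k => toM_iter k
  have hent : ∀ i j, Tendsto
      (fun k => It (toM A) (toM B) (toM (Bimatrix.mk Q 0)) (toM (Bimatrix.mk R 0)) k i j)
      atTop (𝓝 (Z i j)) := fun i j => tendsto_pi_nhds.1 (tendsto_pi_nhds.1 hZt i) j
  have hstr12k : ∀ k (i j : Fin n),
      It (toM A) (toM B) (toM (Bimatrix.mk Q 0)) (toM (Bimatrix.mk R 0)) k
          (Sum.inl i) (Sum.inr j)
        = star (It (toM A) (toM B) (toM (Bimatrix.mk Q 0)) (toM (Bimatrix.mk R 0)) k
            (Sum.inr i) (Sum.inl j)) := by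
    intro k i j
    rw [← hIt k]
    rfl
  have hstr22k : ∀ k (i j : Fin n),
      It (toM A) (toM B) (toM (Bimatrix.mk Q 0)) (toM (Bimatrix.mk R 0)) k
          (Sum.inr i) (Sum.inr j)
        = star (It (toM A) (toM B) (toM (Bimatrix.mk Q 0)) (toM (Bimatrix.mk R 0)) k
            (Sum.inl i) (Sum.inl j)) := by
    intro k i j
    rw [← hIt k]
    rfl
  have hstr12 : ∀ i j : Fin n,
      Z (Sum.inl i) (Sum.inr j) = star (Z (Sum.inr i) (Sum.inl j)) := by
    intro i j
    exact tendsto_nhds_unique (hent _ _)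
      (Filter.Tendsto.congr (fun k => (hstr12k k i j).symm)
        ((continuous_star.tendsto _).comp (hent (Sum.inr i) (Sum.inl j))))
  have hstr22 : ∀ i j : Fin n,
      Z (Sum.inr i) (Sum.inr j) = star (Z (Sum.inl i) (Sum.inl j)) := by
    intro i j
    exact tendsto_nhds_unique (hent _ _)
      (Filter.Tendsto.congr (fun k => (hstr22k k i j).symm)
        ((continuous_star.tendsto _).comp (hent (Sum.inl i) (Sum.inl j))))
  set P'' : Bimatrix n n := ⟨Z.toBlocks₁₁, Z.toBlocks₂₁⟩ with hP''
  have hP''M : toM P'' = Z := by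
    have e12 : mconj Z.toBlocks₂₁ = Z.toBlocks₁₂ := by
      ext i j
      exact (hstr12 i j).symm
    have e22 : mconj Z.toBlocks₁₁ = Z.toBlocks₂₂ := by
      ext i j
      exact (hstr22 i j).symm
    show Matrix.fromBlocks Z.toBlocks₁₁ (mconj Z.toBlocks₂₁) Z.toBlocks₂₁
        (mconj Z.toBlocks₁₁) = Z
    rw [e12, e22, Matrix.fromBlocks_toBlocks]
  have hZpsd := hZpos.posSemidef
  have hP''pos : P''.PosDef := posDef_of_toM (by rw [hP''M]; exact hZpos)
  have hSpd : (Sm (toM B) (toM (Bimatrix.mk R 0)) Z).PosDef := Sm_posDef hRb hZpsd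
  have hdet : IsUnit (Sm (toM B) (toM (Bimatrix.mk R 0)) Z).det :=
    hSpd.det_pos.ne'.isUnit
  have hP''ricc : RiccatiEq A B Q R P'' := by
    refine ⟨(Smat B R P'').inv, ⟨?_, ?_⟩, ?_⟩
    · apply toM_inj
      rw [toM_mul, toM_inv, toM_one, toM_Smat, hP''M]
      exact Matrix.mul_nonsing_inv _ hdet
    · apply toM_inj
      rw [toM_mul, toM_inv, toM_one, toM_Smat, hP''M]
      exact Matrix.nonsing_inv_mul _ hdet
    · apply toM_inj
      simp only [toM_neg, toM_sub, toM_mul, toM_conjT, toM_inv, toM_Smat, hP''M]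
      rw [Fm] at hZfix
      simp only [Matrix.mul_assoc] at hZfix ⊢
      set a := toM (Bimatrix.mk Q 0) with ha
      set t1 := (toM A)ᴴ * (Z * toM A) with ht1
      set t2 := (toM A)ᴴ * (Z * (toM B
        * ((Sm (toM B) (toM (Bimatrix.mk R 0)) Z)⁻¹ * ((toM B)ᴴ * (Z * toM A)))))
        with ht2
      rw [← sub_eq_zero, show -a - (t1 - Z - t2) = -(a + t1 - t2 - Z) from by abel,
        sub_eq_zero_of_eq hZfix, neg_zero]
  have hP''eq : P'' = P := huniq P'' ⟨hP''pos, hP''ricc⟩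
  have hZP : Z = toM P := by rw [← hP''M, hP''eq]
  rw [hZP] at hent
  constructor
  · refine tendsto_pi_nhds.2 fun i => tendsto_pi_nhds.2 fun j => ?_
    have h1 := hent (Sum.inl i) (Sum.inl j)
    have h2 : (fun k => It (toM A) (toM B) (toM (Bimatrix.mk Q 0))
        (toM (Bimatrix.mk R 0)) k (Sum.inl i) (Sum.inl j))
        = fun k => (riccatiIter A B Q R k).fst i j :=
      funext fun k => by rw [← hIt k]; rfl
    rw [h2] at h1
    exact h1
  · refine tendsto_pi_nhds.2 fun i => tendsto_pi_nhds.2 fun j => ?_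
    have h1 := hent (Sum.inr i) (Sum.inl j)
    have h2 : (fun k => It (toM A) (toM B) (toM (Bimatrix.mk Q 0))
        (toM (Bimatrix.mk R 0)) k (Sum.inr i) (Sum.inl j))
        = fun k => (riccatiIter A B Q R k).snd i j :=
      funext fun k => by rw [← hIt k]; rfl
    rw [h2] at h1
    exact h1

end RiccatiTransfer


/-- If the system is stabilizable and `{P₁,P₂}` is the unique positive
definite solution of the bimatrix Riccati equation, then the Riccati iteration starting
from `{Q,0}` converges entrywise to `{P₁,P₂}`. -/
theorem riccatiIter_tendsto
    (A : Bimatrix n n) (B : Bimatrix n m)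
    (Q : Matrix (Fin n) (Fin n) ℂ) (R : Matrix (Fin m) (Fin m) ℂ)
    (hQ : Q.PosDef) (hR : R.PosDef)
    (hstab : Stabilizable A B)
    (P : Bimatrix n n) (hP : P.PosDef ∧ RiccatiEq A B Q R P)
    (huniq : ∀ P' : Bimatrix n n, P'.PosDef ∧ RiccatiEq A B Q R P' → P' = P) :
    Tendsto (fun k => (riccatiIter A B Q R k).fst) atTop (𝓝 P.fst) ∧
    Tendsto (fun k => (riccatiIter A B Q R k).snd) atTop (𝓝 P.snd) := by
  exact RiccatiTransfer.main A B Q R hQ hR P hP huniq
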